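/- Let Ω ⊆ ℝⁿ be open, let f : Ω → ℝⁿ and A, B : Ω → ℝ be C² with ∂A/∂uⁱ = Σ_k (∂B/∂u^k)(∂f^k/∂uⁱ) on Ω. Fix u ∈ Ω, λ ∈ ℝ, and ξ ∈ ℝⁿ with Df(u) ξ = λ ξ (ξ is a characteristic vector with characteristic speed λ). Then the vector η = Hess B(u) · ξ is a left eigenvector of Df(u) with the same eigenvalue: (Df(u))ᵀ η = λ η. In particular, the characteristic vectors of the system are also characteristic vectors of the dual system, in which the derivatives B_k serve as field variables. -/

import Mathlib

lemma aux_diff {E : Type*} [NormedAddCommGroup E] [NormedSpace ℝ E] {g : E → ℝ} {u : E}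
    (hg : ContDiffAt ℝ 2 g u) (v : E) :
    DifferentiableAt ℝ (fun x => fderiv ℝ g x v) u :=
  ((hg.fderiv_right (m := 1) (by norm_num)).differentiableAt one_ne_zero).clm_apply
    (differentiableAt_const v)

lemma aux_d2 {E : Type*} [NormedAddCommGroup E] [NormedSpace ℝ E] {g : E → ℝ} {u : E}
    (hg : ContDiffAt ℝ 2 g u) (v w : E) :
    fderiv ℝ (fun x => fderiv ℝ g x v) u w = fderiv ℝ (fun x => fderiv ℝ g x w) u v := by
  have hd : DifferentiableAt ℝ (fderiv ℝ g) u :=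
    (hg.fderiv_right (m := 1) (by norm_num)).differentiableAt one_ne_zero
  have h1 : ∀ v : E, fderiv ℝ (fun x => fderiv ℝ g x v) u
      = (fderiv ℝ (fderiv ℝ g) u).flip v := by
    intro v
    rw [fderiv_clm_apply hd (differentiableAt_const v)]
    ext w; simp
  rw [h1, h1]
  simp only [ContinuousLinearMap.flip_apply]
  exact (hg.isSymmSndFDerivAt (by norm_num)) w v

/-- Let `f, A, B` be `C²` on the open set `Ω` with
`∂A/∂uⁱ = Σ_k (∂B/∂u^k)(∂f^k/∂uⁱ)` on `Ω`. If `ξ` is a characteristic (right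
eigen-) vector of `Df(u)` with characteristic speed `λ`, i.e.
`Σ_j (∂fⁱ/∂u^j) ξ_j = λ ξᵢ`, then `η = Hess B(u) · ξ` is a left eigenvector of
`Df(u)` with the same eigenvalue: `Σᵢ (∂fⁱ/∂u^j) ηᵢ = λ η_j` for every `j`.
In particular the characteristic vectors of the system are also characteristic
vectors of the dual system, in which the derivatives `B_k` serve as field
variables. -/
theorem stmt_5
    (n : ℕ) (Ω : Set (Fin n → ℝ)) (hΩ : IsOpen Ω)
    (f : (Fin n → ℝ) → (Fin n → ℝ))
    (A B : (Fin n → ℝ) → ℝ)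
    (hf : ContDiffOn ℝ 2 f Ω) (hA : ContDiffOn ℝ 2 A Ω)
    (hB : ContDiffOn ℝ 2 B Ω)
    (hAB : ∀ u ∈ Ω, ∀ i : Fin n,
      fderiv ℝ A u (Pi.single i 1) =
        ∑ k : Fin n, fderiv ℝ B u (Pi.single k 1) *
          fderiv ℝ (fun x => f x k) u (Pi.single i 1))
    (u : Fin n → ℝ) (hu : u ∈ Ω) (lam : ℝ) (ξ : Fin n → ℝ)
    (heig : ∀ i : Fin n,
      ∑ j : Fin n, fderiv ℝ (fun x => f x i) u (Pi.single j 1) * ξ j = lam * ξ i) :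
    ∀ j : Fin n,
      ∑ i : Fin n, fderiv ℝ (fun x => f x i) u (Pi.single j 1) *
        (∑ k : Fin n,
          fderiv ℝ (fun x => fderiv ℝ B x (Pi.single k 1)) u (Pi.single i 1) * ξ k) =
      lam * ∑ k : Fin n,
        fderiv ℝ (fun x => fderiv ℝ B x (Pi.single k 1)) u (Pi.single j 1) * ξ k := by
  set e : Fin n → (Fin n → ℝ) := fun i => Pi.single i 1 with he
  have hmem : Ω ∈ nhds u := hΩ.mem_nhds hu
  have hAu : ContDiffAt ℝ 2 A u := (hA.contDiffAt hmem)
  have hBu : ContDiffAt ℝ 2 B u := (hB.contDiffAt hmem)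
  have hfu : ContDiffAt ℝ 2 f u := (hf.contDiffAt hmem)
  have hfk : ∀ k : Fin n, ContDiffAt ℝ 2 (fun x => f x k) u := fun k =>
    (ContinuousLinearMap.proj (R := ℝ) (φ := fun _ : Fin n => ℝ) k).contDiff.comp_contDiffAt u hfu
  -- abbreviations
  set F : Fin n → Fin n → ℝ := fun k i => fderiv ℝ (fun x => f x k) u (e i) with hF
  set HB : Fin n → Fin n → ℝ :=
    fun k i => fderiv ℝ (fun x => fderiv ℝ B x (e k)) u (e i) with hHB
  -- differentiate the compatibility relation
  have step : ∀ i j : Fin n,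
      fderiv ℝ (fun x => fderiv ℝ A x (e i)) u (e j) =
        ∑ k : Fin n, (HB k j * F k i +
          fderiv ℝ B u (e k) *
            fderiv ℝ (fun x => fderiv ℝ (fun y => f y k) x (e i)) u (e j)) := by
    intro i j
    have hev : (fun x => fderiv ℝ A x (e i)) =ᶠ[nhds u]
        (fun x => ∑ k : Fin n, fderiv ℝ B x (e k) * fderiv ℝ (fun y => f y k) x (e i)) :=
      Filter.eventuallyEq_of_mem hmem (fun x hx => hAB x hx i)
    rw [hev.fderiv_eq]
    have hDk : ∀ x ∈ Ω, ∀ k : Fin n, DifferentiableAt ℝ (fun y => fderiv ℝ B y (e k)) x :=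
      fun x hx k => aux_diff (hB.contDiffAt (hΩ.mem_nhds hx)) (e k)
    have hFk : ∀ k : Fin n,
        DifferentiableAt ℝ (fun y => fderiv ℝ (fun z => f z k) y (e i)) u := fun k =>
      aux_diff (hfk k) (e i)
    rw [fderiv_fun_sum (fun k _ => (show DifferentiableAt ℝ (fun y => fderiv ℝ B y (e k) * fderiv ℝ (fun z => f z k) y (e i)) u from (hDk u hu k).mul (hFk k)))]
    rw [ContinuousLinearMap.sum_apply]
    refine Finset.sum_congr rfl (fun k _ => ?_)
    rw [fderiv_fun_mul (hDk u hu k) (hFk k)]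
    simp only [ContinuousLinearMap.add_apply, ContinuousLinearMap.smul_apply, smul_eq_mul]
    ring
  -- key identity : (Hess B) ∘ Df is symmetric
  have key : ∀ i j : Fin n, ∑ k : Fin n, HB k j * F k i = ∑ k : Fin n, HB k i * F k j := by
    intro i j
    have h1 := step i j
    have h2 := step j i
    rw [aux_d2 hAu (e i) (e j)] at h1
    rw [h2] at h1
    have h3 : ∀ k : Fin n,
        fderiv ℝ (fun x => fderiv ℝ (fun y => f y k) x (e j)) u (e i) =
        fderiv ℝ (fun x => fderiv ℝ (fun y => f y k) x (e i)) u (e j) :=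
      fun k => aux_d2 (hfk k) (e j) (e i)
    simp only [h3] at h1
    rw [Finset.sum_add_distrib, Finset.sum_add_distrib] at h1
    exact add_right_cancel h1.symm
  -- symmetry of Hess B
  have hBsymm : ∀ k i : Fin n, HB k i = HB i k := fun k i => aux_d2 hBu (e k) (e i)
  -- final computation
  intro j
  calc ∑ i : Fin n, F i j * (∑ k : Fin n, HB k i * ξ k)
      = ∑ k : Fin n, ξ k * (∑ i : Fin n, HB i k * F i j) := by
        simp only [Finset.mul_sum]
        rw [Finset.sum_comm]
        exact Finset.sum_congr rfl fun k _ => Finset.sum_congr rfl fun i _ => by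
          rw [hBsymm k i]; ring
    _ = ∑ k : Fin n, ξ k * (∑ i : Fin n, HB i j * F i k) := by
        exact Finset.sum_congr rfl fun k _ => by rw [key j k]
    _ = ∑ i : Fin n, HB i j * (∑ k : Fin n, F i k * ξ k) := by
        simp only [Finset.mul_sum]
        rw [Finset.sum_comm]
        exact Finset.sum_congr rfl fun i _ => Finset.sum_congr rfl fun k _ => by ring
    _ = lam * ∑ k : Fin n, HB k j * ξ k := by
        rw [Finset.mul_sum]
        exact Finset.sum_congr rfl fun i _ => by rw [heig i]; ring
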